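/- arXiv:math/0510648 — 2 statements merged into one kernel-verified Lean document; each statement's English description precedes it below -/
import Mathlib

section
/- Let f : ℕ → (0,∞) satisfy Σ_{n≥1} 1/f(n) < ∞, and let {X(i,j) : i ∈ {1,2}, j ∈ ℕ} be independent random variables with X(i,j) exponentially distributed with rate f(j). Then for any x, y ∈ ℕ, the random series Σ_{j≥x} X(1,j) and Σ_{j≥y} X(2,j) converge almost surely to finite values, and with probability 1 these two sums are not equal. -/
open MeasureTheory ProbabilityTheory Filter Real

/-- `X` is an exponential random variable with rate `l`:
`X ≥ 0` a.s. and `P(X > t) = exp (-l * t)` for all `t ≥ 0`. -/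
def IsExpRV {Ω : Type*} [MeasurableSpace Ω] (μ : Measure Ω) (l : ℝ) (X : Ω → ℝ) : Prop :=
  Measurable X ∧ (∀ᵐ ω ∂μ, 0 ≤ X ω) ∧
    ∀ t : ℝ, 0 ≤ t → μ {ω | t < X ω} = ENNReal.ofReal (Real.exp (-l * t))

lemma exp_int (l : ℝ) (hl : 0 < l) :
    ∫ t in Set.Ioi (0:ℝ), Real.exp (-l * t) = 1 / l := by
  have := integral_Ioi_of_hasDerivAt_of_tendsto
    (f := fun t => -Real.exp (-l*t)/l) (f' := fun t => Real.exp (-l*t)) (a := 0)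
    (m := 0) ?_ ?_ ?_ ?_
  · rw [this]; field_simp; simp
  · exact (((Real.continuous_exp.comp (continuous_const.mul continuous_id)).neg.div_const l)).continuousWithinAt
  · intro t ht
    have : HasDerivAt (fun t => Real.exp (-l*t)) (Real.exp (-l*t) * (-l)) t := by
      have h0 : HasDerivAt (fun t : ℝ => -l * t) (-l) t := by
        simpa using (hasDerivAt_id t).const_mul (-l)
      exact (Real.hasDerivAt_exp (-l*t)).comp t h0
    have h2 := (this.neg).div_const l
    exact h2.congr_deriv (by field_simp)
  · exact exp_neg_integrableOn_Ioi 0 hl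
  · have : Tendsto (fun t => Real.exp (-l*t)) atTop (nhds 0) := by
      simpa [neg_mul, Real.exp_neg, Function.comp_def] using Real.tendsto_exp_neg_atTop_nhds_zero.comp
        (Filter.tendsto_id.const_mul_atTop hl)
    simpa using (this.neg.div_const l)

lemma IsExpRV.lint {Ω : Type*} [MeasurableSpace Ω] {μ : Measure Ω} [IsProbabilityMeasure μ]
    {l : ℝ} (hl : 0 < l) {X : Ω → ℝ} (h : IsExpRV μ l X) :
    ∫⁻ ω, ENNReal.ofReal (X ω) ∂μ = ENNReal.ofReal (1 / l) := by
  rw [lintegral_eq_lintegral_meas_lt μ h.2.1 h.1.aemeasurable]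
  have heq : ∫⁻ t in Set.Ioi (0:ℝ), μ {a | t < X a}
      = ∫⁻ t in Set.Ioi (0:ℝ), ENNReal.ofReal (Real.exp (-l*t)) :=
    setLIntegral_congr_fun measurableSet_Ioi (fun t ht => h.2.2 t (le_of_lt ht))
  rw [heq, ← ofReal_integral_eq_lintegral_ofReal (exp_neg_integrableOn_Ioi 0 hl)
    (ae_of_all _ fun t => (Real.exp_pos _).le), exp_int l hl]

lemma IsExpRV.atom {Ω : Type*} [MeasurableSpace Ω] {μ : Measure Ω} [IsProbabilityMeasure μ]
    {l : ℝ} (hl : 0 < l) {X : Ω → ℝ} (h : IsExpRV μ l X) (c : ℝ) :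
    μ {ω | X ω = c} = 0 := by
  rcases lt_trichotomy c 0 with hc | hc | hc
  · refine measure_mono_null (fun ω (hω : X ω = c) => ?_) (ae_iff.mp h.2.1)
    simp only [Set.mem_setOf_eq, not_le, hω]; exact hc
  · subst hc
    refine measure_mono_null (t := {ω | 0 < X ω}ᶜ) (fun ω (hω : X ω = 0) => by simp [hω]) ?_
    · have h1 : μ {ω | 0 < X ω} = 1 := by
        simpa using h.2.2 0 le_rfl
      rw [measure_compl (measurableSet_lt measurable_const h.1) (measure_ne_top _ _), h1,
        measure_univ, tsub_self]
  · have key : ∀ ε ∈ Set.Ioo (0:ℝ) c,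
        (μ {ω | X ω = c}).toReal ≤ Real.exp (-l*(c-ε)) - Real.exp (-l*c) := by
      intro ε hε
      have hsub1 : {ω | c < X ω} ⊆ {ω | c - ε < X ω} := fun ω hω => by simp only [Set.mem_setOf_eq] at *; linarith [hε.1]
      have hsub : {ω | X ω = c} ⊆ {ω | c - ε < X ω} \ {ω | c < X ω} := by
        intro ω hω
        constructor
        · show c - ε < X ω; rw [hω]; linarith [hε.1]
        · show ¬ c < X ω; rw [hω]; exact lt_irrefl c
      have hm1 := h.2.2 (c - ε) (by linarith [hε.2])
      have hm2 := h.2.2 c hc.le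
      have hle : Real.exp (-l*c) ≤ Real.exp (-l*(c-ε)) := by
        apply Real.exp_le_exp.mpr
        nlinarith [hε.1, hl]
      calc (μ {ω | X ω = c}).toReal
          ≤ (μ ({ω | c - ε < X ω} \ {ω | c < X ω})).toReal := by
            apply ENNReal.toReal_mono (measure_ne_top _ _) (measure_mono hsub)
        _ ≤ Real.exp (-l*(c-ε)) - Real.exp (-l*c) := by
            rw [measure_diff hsub1 (measurableSet_lt measurable_const h.1).nullMeasurableSet
              (measure_ne_top _ _), hm1, hm2, ← ENNReal.ofReal_sub _ (Real.exp_pos _).le]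
            exact ENNReal.toReal_le_of_le_ofReal (by linarith) le_rfl
    have htend : Tendsto (fun ε : ℝ => Real.exp (-l*(c-ε)) - Real.exp (-l*c)) (nhdsWithin 0 (Set.Ioi 0)) (nhds 0) := by
      have hcont : Continuous (fun ε : ℝ => Real.exp (-l*(c-ε)) - Real.exp (-l*c)) := by
        continuity
      have := hcont.tendsto 0
      simp only [sub_zero, sub_self] at this
      exact this.mono_left nhdsWithin_le_nhds
    have hle0 : (μ {ω | X ω = c}).toReal ≤ 0 := by
      refine ge_of_tendsto htend ?_
      filter_upwards [Ioo_mem_nhdsGT_of_mem (Set.mem_Ico.mpr ⟨le_rfl, hc⟩)] with ε hε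
      exact key ε hε
    have := ENNReal.toReal_nonneg (a := μ {ω | X ω = c})
    have hz : (μ {ω | X ω = c}).toReal = 0 := le_antisymm hle0 this
    exact (ENNReal.toReal_eq_zero_iff _).mp hz |>.resolve_right (measure_ne_top _ _)

lemma diag_null {Ω : Type*} [MeasurableSpace Ω] {μ : Measure Ω} [IsProbabilityMeasure μ]
    {W V : Ω → ℝ} (hW : Measurable W) (hV : Measurable V) (hInd : IndepFun V W μ)
    (hatom : ∀ c : ℝ, μ {ω | W ω = c} = 0) : μ {ω | W ω = V ω} = 0 := by
  have hmap := (indepFun_iff_map_prod_eq_prod_map_map hV.aemeasurable hW.aemeasurable).mp hInd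
  have hs : MeasurableSet {p : ℝ × ℝ | p.2 = p.1} :=
    measurableSet_eq_fun measurable_snd measurable_fst
  have hset : {ω | W ω = V ω} = (fun ω => (V ω, W ω)) ⁻¹' {p | p.2 = p.1} := rfl
  rw [hset, ← Measure.map_apply (hV.prodMk hW) hs, hmap, Measure.prod_apply hs]
  have hz : ∀ v : ℝ, (μ.map W) (Prod.mk v ⁻¹' {p : ℝ × ℝ | p.2 = p.1}) = 0 := by
    intro v
    have : (Prod.mk v ⁻¹' {p : ℝ × ℝ | p.2 = p.1}) = {v} := by
      ext w; simp [eq_comm]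
    rw [this, Measure.map_apply hW (measurableSet_singleton v)]
    exact hatom v
  rw [lintegral_congr hz, lintegral_zero]

/-- In the monopolistic regime (`∑ 1/f(n) < ∞`), the total arrival-time series
of both bins converge a.s. and are a.s. different. -/
theorem stmt5 {Ω : Type*} [MeasurableSpace Ω] (μ : Measure Ω) [IsProbabilityMeasure μ]
    (f : ℕ → ℝ) (hf : ∀ n, 0 < f n) (hsum : Summable (fun n => 1 / f n))
    (X : Fin 2 × ℕ → Ω → ℝ)
    (hexp : ∀ p : Fin 2 × ℕ, IsExpRV μ (f p.2) (X p))
    (hindep : iIndepFun X μ)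
    (x y : ℕ) :
    ∀ᵐ ω ∂μ, Summable (fun j : ℕ => X (0, x + j) ω) ∧
      Summable (fun j : ℕ => X (1, y + j) ω) ∧
      (∑' j : ℕ, X (0, x + j) ω) ≠ (∑' j : ℕ, X (1, y + j) ω) := by
  classical
  have hmeas : ∀ p, Measurable (X p) := fun p => (hexp p).1
  have hnn : ∀ᵐ ω ∂μ, ∀ p : Fin 2 × ℕ, 0 ≤ X p ω := ae_all_iff.mpr fun p => (hexp p).2.1
  have hlint : ∀ p : Fin 2 × ℕ, ∫⁻ ω, ENNReal.ofReal (X p ω) ∂μ = ENNReal.ofReal (1 / f p.2) :=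
    fun p => (hexp p).lint (hf p.2)
  have key : ∀ (i : Fin 2) (z : ℕ), ∀ᵐ ω ∂μ,
      (∑' j : ℕ, ENNReal.ofReal (X (i, z + j) ω)) < ⊤ := by
    intro i z
    refine ae_lt_top (Measurable.ennreal_tsum fun j => (hmeas _).ennreal_ofReal) ?_
    rw [lintegral_tsum fun j => ((hmeas _).ennreal_ofReal).aemeasurable]
    simp_rw [hlint]
    have hsum' : Summable (fun j => 1 / f (z + j)) := by
      have := (summable_nat_add_iff z).mpr hsum
      refine this.congr fun j => by rw [add_comm]
    rw [← ENNReal.ofReal_tsum_of_nonneg (fun j => (one_div_pos.mpr (hf _)).le) hsum']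
    exact ENNReal.ofReal_ne_top
  -- independence setup
  set t : Set (Fin 2 × ℕ) := {((0 : Fin 2), x)} with ht
  have hindep' : Indep (⨆ p ∈ t, MeasurableSpace.comap (X p) inferInstance)
      (⨆ p ∈ tᶜ, MeasurableSpace.comap (X p) inferInstance) μ :=
    indep_biSup_compl (fun p => (hmeas p).comap_le) hindep t
  set W : Ω → ℝ := X (0, x) with hW
  set T1 : Ω → ENNReal := fun ω => ∑' j : ℕ, ENNReal.ofReal (X (0, x + 1 + j) ω) with hT1
  set T2 : Ω → ENNReal := fun ω => ∑' j : ℕ, ENNReal.ofReal (X (1, y + j) ω) with hT2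
  set V : Ω → ℝ := fun ω => (T2 ω).toReal - (T1 ω).toReal with hV
  have hXm' : ∀ p : Fin 2 × ℕ, p ∈ tᶜ → Measurable[⨆ p ∈ tᶜ, MeasurableSpace.comap (X p) inferInstance] (X p) := fun p hp =>
    Measurable.of_comap_le (le_biSup (f := fun p => MeasurableSpace.comap (X p) inferInstance) hp)
  have hne1 : ∀ j : ℕ, ((0 : Fin 2), x + 1 + j) ∈ tᶜ := by
    intro j; simp [ht, Prod.ext_iff]; omega
  have hne2 : ∀ j : ℕ, ((1 : Fin 2), y + j) ∈ tᶜ := by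
    intro j; simp [ht, Prod.ext_iff]
  have hVm' : Measurable[⨆ p ∈ tᶜ, MeasurableSpace.comap (X p) inferInstance] V := by
    refine Measurable.sub ?_ ?_
    · exact (Measurable.ennreal_tsum fun j =>
        (hXm' _ (hne2 j)).ennreal_ofReal).ennreal_toReal
    · exact (Measurable.ennreal_tsum fun j =>
        (hXm' _ (hne1 j)).ennreal_ofReal).ennreal_toReal
  have hm'le : (⨆ p ∈ tᶜ, MeasurableSpace.comap (X p) inferInstance) ≤ _ := iSup₂_le fun p _ => (hmeas p).comap_le
  have hVmeas : Measurable V := hVm'.mono hm'le le_rfl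
  have hIndWV : IndepFun V W μ := by
    have h1 : MeasurableSpace.comap W inferInstance ≤
        ⨆ p ∈ t, MeasurableSpace.comap (X p) inferInstance :=
      le_biSup (f := fun p => MeasurableSpace.comap (X p) inferInstance) (Set.mem_singleton _)
    exact (indep_of_indep_of_le_left (indep_of_indep_of_le_right hindep' hVm'.comap_le) h1).symm
  have hdiag : μ {ω | W ω = V ω} = 0 :=
    diag_null (hmeas _) hVmeas hIndWV ((hexp (0, x)).atom (hf x))
  have hdiag' : ∀ᵐ ω ∂μ, W ω ≠ V ω := by
    rw [ae_iff]
    simpa using hdiag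
  filter_upwards [hnn, key 0 x, key 1 y, hdiag'] with ω h0 h1 h2 h3
  have hS1 : Summable fun j : ℕ => X (0, x + j) ω :=
    (ENNReal.summable_toReal h1.ne).congr fun j => ENNReal.toReal_ofReal (h0 _)
  have hS2 : Summable fun j : ℕ => X (1, y + j) ω :=
    (ENNReal.summable_toReal h2.ne).congr fun j => ENNReal.toReal_ofReal (h0 _)
  refine ⟨hS1, hS2, ?_⟩
  have htail : (∑' j : ℕ, X (0, x + 1 + j) ω) = (T1 ω).toReal := by
    rw [hT1, ENNReal.tsum_toReal_eq fun j => ENNReal.ofReal_ne_top]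
    exact (tsum_congr fun j => (ENNReal.toReal_ofReal (h0 _)).symm)
  have hsum1 : (∑' j : ℕ, X (0, x + j) ω) = W ω + (T1 ω).toReal := by
    rw [Summable.tsum_eq_zero_add hS1]
    have hidx : (∑' j : ℕ, X (0, x + (j + 1)) ω) = ∑' j : ℕ, X (0, x + 1 + j) ω :=
      tsum_congr fun j => by rw [show x + (j + 1) = x + 1 + j from by omega]
    rw [hidx, htail, hW, add_zero]
  have hsum2 : (∑' j : ℕ, X (1, y + j) ω) = (T2 ω).toReal := by
    rw [hT2, ENNReal.tsum_toReal_eq fun j => ENNReal.ofReal_ne_top]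
    exact (tsum_congr fun j => (ENNReal.toReal_ofReal (h0 _)).symm)
  intro hcontra
  apply h3
  rw [hsum1, hsum2] at hcontra
  show W ω = (T2 ω).toReal - (T1 ω).toReal
  linarith
end

section
/- For a standard Brownian motion B on [0,1], the random variable max_{0≤s≤1} B(s) has the same distribution as |N| where N is a standard Gaussian; i.e., for all λ ≥ 0, P(max_{0≤s≤1} B(s) ≤ λ) = √(2/π) ∫_0^λ e^{−x²/2} dx. -/
open MeasureTheory ProbabilityTheory Filter Real Topology
open scoped ENNReal NNReal

/-- `B` is a standard Brownian motion on `[0,1]` over the probability space `(Ω, μ)`: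
it starts at `0`, has a.s. continuous paths on `[0,1]`, and for every finite
increasing sequence of times in `[0,1]` the increments are independent with
`B(t) - B(s) ~ N(0, t - s)`. -/
def IsStandardBM {Ω : Type*} [MeasurableSpace Ω] (B : ℝ → Ω → ℝ) (μ : Measure Ω) : Prop :=
  (∀ t : ℝ, Measurable (B t)) ∧
  (∀ᵐ ω ∂μ, B 0 ω = 0) ∧
  (∀ᵐ ω ∂μ, ContinuousOn (fun t => B t ω) (Set.Icc 0 1)) ∧
  (∀ (k : ℕ) (s : Fin (k + 1) → ℝ), StrictMono s → (∀ i, s i ∈ Set.Icc (0:ℝ) 1) →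
    iIndepFun
      (fun i : Fin k => fun ω => B (s i.succ) ω - B (s i.castSucc) ω) μ) ∧
  (∀ s t : ℝ, 0 ≤ s → s < t → t ≤ 1 →
    Measure.map (fun ω => B t ω - B s ω) μ
      = gaussianReal 0 (Real.toNNReal (t - s)))

namespace BMRefl

variable {n : ℕ}

/-- Extend `x : Fin n → ℝ` by zero to `ℕ`. -/
def ext (x : Fin n → ℝ) (i : ℕ) : ℝ := if h : i < n then x ⟨i, h⟩ else 0

/-- Partial sums of coordinates. -/
def psum (x : Fin n → ℝ) (j : ℕ) : ℝ := ∑ i ∈ Finset.range j, ext x i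

@[simp] lemma psum_zero (x : Fin n → ℝ) : psum x 0 = 0 := by simp [psum]

lemma psum_succ (x : Fin n → ℝ) (j : ℕ) : psum x (j + 1) = psum x j + ext x j := by
  simp [psum, Finset.sum_range_succ]

lemma measurable_ext (i : ℕ) : Measurable fun x : Fin n → ℝ => ext x i := by
  unfold ext
  split
  · exact measurable_pi_apply _
  · exact measurable_const

lemma measurable_psum (j : ℕ) : Measurable fun x : Fin n → ℝ => psum x j :=
  Finset.measurable_sum _ fun i _ => measurable_ext i

/-- Flip (negate) all coordinates with index `≥ j`. -/
def flipAt (j : ℕ) (x : Fin n → ℝ) : Fin n → ℝ := fun i => if (i : ℕ) < j then x i else -x i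

lemma measurable_flipAt (j : ℕ) : Measurable (flipAt (n := n) j) := by
  refine measurable_pi_lambda _ fun i => ?_
  unfold flipAt
  split
  · exact measurable_pi_apply _
  · exact (measurable_pi_apply _).neg

@[simp] lemma flipAt_flipAt (j : ℕ) (x : Fin n → ℝ) : flipAt j (flipAt j x) = x := by
  funext i; simp only [flipAt]; split <;> simp

lemma ext_flipAt (j : ℕ) (x : Fin n → ℝ) (i : ℕ) :
    ext (flipAt j x) i = if i < j then ext x i else -ext x i := by
  unfold ext flipAt
  by_cases h : i < n <;> simp [h] <;> split <;> simp

lemma psum_flipAt_of_le (x : Fin n → ℝ) {j m : ℕ} (h : m ≤ j) :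
    psum (flipAt j x) m = psum x m := by
  unfold psum
  refine Finset.sum_congr rfl fun i hi => ?_
  rw [ext_flipAt, if_pos (lt_of_lt_of_le (Finset.mem_range.mp hi) h)]

lemma psum_flipAt_of_ge (x : Fin n → ℝ) {j m : ℕ} (h : j ≤ m) :
    psum (flipAt j x) m = 2 * psum x j - psum x m := by
  have key : ∀ M, psum (flipAt j x) (j + M) = 2 * psum x j - psum x (j + M) := by
    intro M
    induction M with
    | zero => rw [Nat.add_zero, psum_flipAt_of_le x le_rfl]; ring
    | succ M ih =>
        rw [← Nat.add_assoc, psum_succ, psum_succ, ih, ext_flipAt,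
          if_neg (by omega)]
        ring
  obtain ⟨M, rfl⟩ := Nat.exists_eq_add_of_le h
  exact key M

section Tau

variable {n : ℕ}

/-- the partial-sum path hits level `l` by time `n`. -/
def hits (l : ℝ) (x : Fin n → ℝ) : Prop := ∃ j, j ≤ n ∧ l ≤ psum x j

open scoped Classical in
/-- First hitting time of level `l`, or `n+1` if never hit. -/
noncomputable def tau (l : ℝ) (x : Fin n → ℝ) : ℕ :=
  if h : hits l x then Nat.find h else n + 1

lemma tau_le (l : ℝ) {x : Fin n → ℝ} (h : hits l x) : tau l x ≤ n := by
  classical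
  rw [tau, dif_pos h]
  exact (Nat.find_spec h).1

lemma le_psum_tau (l : ℝ) {x : Fin n → ℝ} (h : hits l x) : l ≤ psum x (tau l x) := by
  classical
  rw [tau, dif_pos h]
  exact (Nat.find_spec h).2

lemma psum_lt_of_lt_tau (l : ℝ) {x : Fin n → ℝ} {j : ℕ} (hj : j < tau l x) (hjn : j ≤ n) :
    psum x j < l := by
  classical
  by_cases h : hits l x
  · rw [tau, dif_pos h] at hj
    have := Nat.find_min h hj
    push_neg at this
    exact this hjn
  · by_contra hc
    exact h ⟨j, hjn, le_of_not_gt hc⟩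

lemma tau_eq_of (l : ℝ) {x : Fin n → ℝ} {j : ℕ} (hjn : j ≤ n) (h2 : l ≤ psum x j)
    (h3 : ∀ m < j, psum x m < l) : tau l x = j := by
  classical
  have h : hits l x := ⟨j, hjn, h2⟩
  rw [tau, dif_pos h]
  refine (Nat.find_eq_iff _).mpr ?_
  exact ⟨⟨hjn, h2⟩, fun m hm => by
    intro hc
    exact absurd (h3 m hm) (not_lt.mpr hc.2)⟩

lemma tau_eq_of_not (l : ℝ) {x : Fin n → ℝ} (h : ¬ hits l x) : tau l x = n + 1 := by
  rw [tau, dif_neg h]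

lemma hits_iff_tau_le (l : ℝ) (x : Fin n → ℝ) : hits l x ↔ tau l x ≤ n := by
  constructor
  · exact tau_le l
  · intro h
    by_contra hc
    rw [tau_eq_of_not l hc] at h
    omega

lemma measurable_tau (l : ℝ) : Measurable (tau (n := n) l) := by
  apply measurable_to_countable'
  intro j
  by_cases hj : j ≤ n
  · have : tau (n := n) l ⁻¹' {j} =
        {x | l ≤ psum x j} ∩ ⋂ m ∈ Finset.range j, {x | psum x m < l} := by
      ext x
      simp only [Set.mem_preimage, Set.mem_singleton_iff, Set.mem_inter_iff, Set.mem_iInter,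
        Finset.mem_range, Set.mem_setOf_eq]
      constructor
      · rintro rfl
        have hh : hits l x := (hits_iff_tau_le l x).mpr hj
        exact ⟨le_psum_tau l hh, fun m hm => psum_lt_of_lt_tau l hm (by omega)⟩
      · rintro ⟨h1, h2⟩
        exact tau_eq_of l hj h1 h2
    rw [this]
    exact (measurableSet_le measurable_const (measurable_psum j)).inter
      (MeasurableSet.iInter fun m => MeasurableSet.iInter fun _ =>
        measurableSet_lt (measurable_psum m) measurable_const)
  · by_cases hj' : j = n + 1
    · subst hj'
      have : tau (n := n) l ⁻¹' {n + 1} = ⋂ m ∈ Finset.range (n + 1), {x | psum x m < l} := by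
        ext x
        simp only [Set.mem_preimage, Set.mem_singleton_iff, Set.mem_iInter, Finset.mem_range,
          Set.mem_setOf_eq]
        constructor
        · intro h m hm
          exact psum_lt_of_lt_tau l (by omega) (by omega)
        · intro h
          refine tau_eq_of_not l ?_
          rintro ⟨m, hm, hml⟩
          exact absurd (h m (by omega)) (not_lt.mpr hml)
      rw [this]
      exact MeasurableSet.iInter fun m => MeasurableSet.iInter fun _ =>
        measurableSet_lt (measurable_psum m) measurable_const
    · have : tau (n := n) l ⁻¹' {j} = ∅ := by
        ext x
        simp only [Set.mem_preimage, Set.mem_singleton_iff, Set.mem_empty_iff_false,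
          iff_false]
        intro hc
        by_cases h : hits l x
        · exact hj (hc ▸ tau_le l h)
        · exact hj' (hc ▸ tau_eq_of_not l h)
      rw [this]
      exact MeasurableSet.empty

/-- The reflection map: negate all increments after the first hitting time of `l`. -/
noncomputable def reflMap (l : ℝ) (x : Fin n → ℝ) : Fin n → ℝ := flipAt (tau l x) x

lemma measurable_reflMap (l : ℝ) : Measurable (reflMap (n := n) l) := by
  refine measurable_pi_lambda _ fun i => ?_
  have : (fun x : Fin n → ℝ => reflMap l x i) =
      fun x => if (i : ℕ) < tau l x then x i else -x i := rfl
  rw [this]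
  have hset : MeasurableSet {x : Fin n → ℝ | (i : ℕ) < tau l x} := by
    have : {x : Fin n → ℝ | (i : ℕ) < tau l x} = tau l ⁻¹' {j | (i : ℕ) < j} := rfl
    rw [this]
    exact (measurable_tau l) (MeasurableSet.of_discrete)
  exact Measurable.ite hset (measurable_pi_apply i) (measurable_pi_apply i).neg

lemma reflMap_of_not_hits (l : ℝ) {x : Fin n → ℝ} (h : ¬ hits l x) : reflMap l x = x := by
  funext i
  rw [reflMap, tau_eq_of_not l h, flipAt, if_pos (by omega)]

lemma tau_flipAt_tau (l : ℝ) (x : Fin n → ℝ) (h : hits l x) :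
    tau l (flipAt (tau l x) x) = tau l x := by
  refine tau_eq_of l (tau_le l h) ?_ ?_
  · rw [psum_flipAt_of_le x le_rfl]
    exact le_psum_tau l h
  · intro m hm
    rw [psum_flipAt_of_le x (le_of_lt hm)]
    exact psum_lt_of_lt_tau l hm (le_trans (le_of_lt hm) (tau_le l h))

lemma tau_reflMap (l : ℝ) (x : Fin n → ℝ) : tau l (reflMap l x) = tau l x := by
  by_cases h : hits l x
  · rw [reflMap]; exact tau_flipAt_tau l x h
  · rw [reflMap_of_not_hits l h]

lemma hits_reflMap_iff (l : ℝ) (x : Fin n → ℝ) : hits l (reflMap l x) ↔ hits l x := by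
  rw [hits_iff_tau_le, hits_iff_tau_le, tau_reflMap]

lemma reflMap_reflMap (l : ℝ) (x : Fin n → ℝ) : reflMap l (reflMap l x) = x := by
  rw [reflMap, tau_reflMap, reflMap, flipAt_flipAt]

end Tau
section MeasurePres

variable {n : ℕ} (ν : Fin n → Measure ℝ) [∀ i, IsProbabilityMeasure (ν i)]

lemma measurePreserving_flipAt (hsym : ∀ i, (ν i).map (fun y => -y) = ν i) (j : ℕ) :
    MeasurePreserving (flipAt (n := n) j) (Measure.pi ν) (Measure.pi ν) := by
  have : flipAt (n := n) j =
      fun x i => (fun (i : Fin n) (y : ℝ) => if (i : ℕ) < j then y else -y) i (x i) := rfl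
  rw [this]
  refine measurePreserving_pi ν ν (f := fun (i : Fin n) (y : ℝ) => if (i : ℕ) < j then y else -y) fun i => ?_
  by_cases h : (i : ℕ) < j
  · simp only [if_pos h]
    exact MeasurePreserving.id _
  · simp only [if_neg h]
    exact ⟨measurable_neg, hsym i⟩

lemma measure_partition_tau (l : ℝ) {S : Set (Fin n → ℝ)} (hS : MeasurableSet S) :
    Measure.pi ν S = ∑ j ∈ Finset.range (n + 2), Measure.pi ν (S ∩ tau l ⁻¹' {j}) := by
  have hcover : S = ⋃ j ∈ Finset.range (n + 2), S ∩ tau l ⁻¹' {j} := by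
    ext x
    simp only [Set.mem_iUnion, Set.mem_inter_iff, Set.mem_preimage, Set.mem_singleton_iff,
      Finset.mem_range, exists_prop]
    constructor
    · intro hx
      refine ⟨tau l x, ?_, hx, rfl⟩
      by_cases h : hits l x
      · have := tau_le l h; omega
      · rw [tau_eq_of_not l h]; omega
    · rintro ⟨j, _, hx, _⟩; exact hx
  conv_lhs => rw [hcover]
  rw [measure_biUnion_finset]
  · intro a _ b _ hab
    refine Set.disjoint_left.mpr ?_
    rintro x ⟨_, hxa⟩ ⟨_, hxb⟩
    exact hab (hxa.symm.trans hxb)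
  · intro j _
    exact hS.inter ((measurable_tau l) (MeasurableSet.singleton j))

lemma measure_reflMap_preimage (hsym : ∀ i, (ν i).map (fun y => -y) = ν i) (l : ℝ)
    {A : Set (Fin n → ℝ)} (hA : MeasurableSet A) :
    Measure.pi ν (reflMap l ⁻¹' A) = Measure.pi ν A := by
  rw [measure_partition_tau ν l ((measurable_reflMap l) hA),
    measure_partition_tau ν l hA]
  refine Finset.sum_congr rfl fun j _ => ?_
  have hkey : reflMap l ⁻¹' A ∩ tau l ⁻¹' {j} = flipAt j ⁻¹' (A ∩ tau l ⁻¹' {j}) := by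
    ext x
    simp only [Set.mem_inter_iff, Set.mem_preimage, Set.mem_singleton_iff]
    constructor
    · rintro ⟨hxA, hxj⟩
      subst hxj
      refine ⟨by rwa [reflMap] at hxA, ?_⟩
      -- tau of flipped is tau x
      by_cases h : hits l x
      · exact tau_flipAt_tau l x h
      · rw [show flipAt (tau l x) x = x from reflMap_of_not_hits l h]
    · rintro ⟨hxA, hxj⟩
      -- tau l (flipAt j x) = j ; show tau l x = j and reflMap l x = flipAt j x
      have hx_tau : tau l x = j := by
        have h2 : flipAt j (flipAt j x) = x := flipAt_flipAt j x
        by_cases h : hits l (flipAt j x)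
        · have h4 := tau_flipAt_tau l (flipAt j x) h
          rw [hxj, h2] at h4
          exact h4
        · have h3 := reflMap_of_not_hits l h
          rw [reflMap, hxj, h2] at h3
          rw [h3]
          exact hxj
      refine ⟨?_, hx_tau⟩
      rw [reflMap, hx_tau]
      exact hxA
  rw [hkey]
  exact (measurePreserving_flipAt ν hsym j).measure_preimage
    (hA.inter ((measurable_tau l) (MeasurableSet.singleton j))).nullMeasurableSet

end MeasurePres
section Bounds

variable {n : ℕ}

def Aset (n : ℕ) (l : ℝ) : Set (Fin n → ℝ) := {x | hits l x ∧ psum x n < l}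
def Cset (n : ℕ) (c : ℝ) : Set (Fin n → ℝ) := {x | c < psum x n}
def Mset (n : ℕ) (l : ℝ) : Set (Fin n → ℝ) := {x | psum x n = l}
def Kset (n : ℕ) (l : ℝ) : Set (Fin n → ℝ) := {x | ∀ j ≤ n, psum x j ≤ l}
def Uset (n : ℕ) (δ : ℝ) : Set (Fin n → ℝ) := ⋃ i : Fin n, {x | δ < x i}

lemma measurableSet_hits (l : ℝ) : MeasurableSet {x : Fin n → ℝ | hits l x} := by
  have : {x : Fin n → ℝ | hits l x} = ⋃ j ∈ Finset.range (n + 1), {x | l ≤ psum x j} := by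
    ext x
    simp only [Set.mem_setOf_eq, Set.mem_iUnion, Finset.mem_range, exists_prop, hits]
    constructor
    · rintro ⟨j, hj, hle⟩; exact ⟨j, by omega, hle⟩
    · rintro ⟨j, hj, hle⟩; exact ⟨j, by omega, hle⟩
  rw [this]
  exact MeasurableSet.biUnion (Set.to_countable _)
    fun j _ => measurableSet_le measurable_const (measurable_psum j)

lemma measurableSet_Aset (l : ℝ) : MeasurableSet (Aset n l) :=
  (measurableSet_hits l).inter (measurableSet_lt (measurable_psum n) measurable_const)

lemma measurableSet_Cset (c : ℝ) : MeasurableSet (Cset n c) :=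
  measurableSet_lt measurable_const (measurable_psum n)

lemma measurableSet_Mset (l : ℝ) : MeasurableSet (Mset n l) :=
  measurableSet_eq_fun (measurable_psum n) measurable_const

lemma measurableSet_Kset (l : ℝ) : MeasurableSet (Kset n l) := by
  have : Kset n l = ⋂ j ∈ Finset.range (n + 1), {x : Fin n → ℝ | psum x j ≤ l} := by
    ext x
    simp only [Kset, Set.mem_setOf_eq, Set.mem_iInter, Finset.mem_range]
    exact ⟨fun h j hj => h j (by omega), fun h j hj => h j (by omega)⟩
  rw [this]
  exact MeasurableSet.biInter (Set.to_countable _)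
    fun j _ => measurableSet_le (measurable_psum j) measurable_const

lemma measurableSet_Uset (δ : ℝ) : MeasurableSet (Uset n δ) :=
  MeasurableSet.iUnion fun i => measurableSet_lt measurable_const (measurable_pi_apply i)

lemma refl_preimage_A_subset (l : ℝ) : reflMap l ⁻¹' (Aset n l) ⊆ Cset n l := by
  intro x hx
  obtain ⟨hy, hylt⟩ := hx
  have hxhits : hits l x := (hits_reflMap_iff l x).mp hy
  have ht : tau l x ≤ n := tau_le l hxhits
  have h1 : psum (reflMap l x) (tau l x) = psum x (tau l x) := by
    rw [reflMap]; exact psum_flipAt_of_le x le_rfl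
  have h2 : psum (reflMap l x) n = 2 * psum x (tau l x) - psum x n := by
    rw [reflMap]; exact psum_flipAt_of_ge x ht
  have h3 : l ≤ psum x (tau l x) := by
    have := le_psum_tau l hy
    rw [tau_reflMap, h1] at this
    exact this
  have : psum (reflMap l x) n < l := hylt
  rw [h2] at this
  show l < psum x n
  linarith

lemma overshoot_subset (l δ : ℝ) (h0 : 0 ≤ l) (hδ : 0 < δ) {x : Fin n → ℝ}
    (hx : hits l x) (hover : l + δ < psum x (tau l x)) : x ∈ Uset n δ := by
  have ht : tau l x ≤ n := tau_le l hx
  have ht0 : tau l x ≠ 0 := by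
    intro hc
    rw [hc, psum_zero] at hover
    linarith
  obtain ⟨m, hm⟩ : ∃ m, tau l x = m + 1 := ⟨tau l x - 1, by omega⟩
  have hmn : m < n := by omega
  have hlt : psum x m < l := psum_lt_of_lt_tau l (by omega) (by omega)
  have hext : ext x m = x ⟨m, hmn⟩ := by rw [ext, dif_pos hmn]
  have : δ < x ⟨m, hmn⟩ := by
    have := psum_succ x m
    rw [← hm] at this
    rw [← hext]
    linarith [hover, hlt]
  exact Set.mem_iUnion.mpr ⟨⟨m, hmn⟩, this⟩

lemma lower_subset (l δ : ℝ) (h0 : 0 ≤ l) (hδ : 0 < δ) :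
    Cset n (l + 2 * δ) \ Uset n δ ⊆ reflMap l ⁻¹' (Aset n l) := by
  rintro x ⟨hC, hU⟩
  have hxn : l + 2 * δ < psum x n := hC
  have hxhits : hits l x := ⟨n, le_rfl, by linarith⟩
  have ht : tau l x ≤ n := tau_le l hxhits
  have hov : psum x (tau l x) ≤ l + δ := by
    by_contra hc
    exact hU (overshoot_subset l δ h0 hδ hxhits (lt_of_not_ge hc))
  refine ⟨(hits_reflMap_iff l x).mpr hxhits, ?_⟩
  have h2 : psum (reflMap l x) n = 2 * psum x (tau l x) - psum x n := by
    rw [reflMap]; exact psum_flipAt_of_ge x ht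
  show psum (reflMap l x) n < l
  rw [h2]
  linarith

variable (ν : Fin n → Measure ℝ) [∀ i, IsProbabilityMeasure (ν i)]

lemma upper_bound (hsym : ∀ i, (ν i).map (fun y => -y) = ν i) (l : ℝ) :
    (1 : ℝ≥0∞) ≤ Measure.pi ν (Kset n l) + 2 * Measure.pi ν (Cset n l)
      + Measure.pi ν (Mset n l) := by
  have hcover : (Set.univ : Set (Fin n → ℝ)) ⊆ Kset n l ∪ (Aset n l ∪ (Cset n l ∪ Mset n l)) := by
    intro x _
    by_cases hK : x ∈ Kset n l
    · exact Or.inl hK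
    · right
      have hh : hits l x := by
        simp only [Kset, Set.mem_setOf_eq, not_forall] at hK
        obtain ⟨j, hj, hgt⟩ := hK
        exact ⟨j, hj, le_of_lt (lt_of_not_ge hgt)⟩
      rcases lt_trichotomy (psum x n) l with h | h | h
      · exact Or.inl ⟨hh, h⟩
      · exact Or.inr (Or.inr h)
      · exact Or.inr (Or.inl h)
  have hA : Measure.pi ν (Aset n l) ≤ Measure.pi ν (Cset n l) := by
    rw [← measure_reflMap_preimage ν hsym l (measurableSet_Aset l)]
    exact measure_mono (refl_preimage_A_subset l)
  calc (1 : ℝ≥0∞) = Measure.pi ν Set.univ := (measure_univ).symm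
    _ ≤ Measure.pi ν (Kset n l ∪ (Aset n l ∪ (Cset n l ∪ Mset n l))) := measure_mono hcover
    _ ≤ Measure.pi ν (Kset n l) + (Measure.pi ν (Aset n l)
        + (Measure.pi ν (Cset n l) + Measure.pi ν (Mset n l))) := by
        refine le_trans (measure_union_le _ _) ?_
        gcongr
        refine le_trans (measure_union_le _ _) ?_
        gcongr
        exact measure_union_le _ _
    _ ≤ Measure.pi ν (Kset n l) + 2 * Measure.pi ν (Cset n l) + Measure.pi ν (Mset n l) := by
        rw [two_mul]
        calc _ ≤ Measure.pi ν (Kset n l) + (Measure.pi ν (Cset n l)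
            + (Measure.pi ν (Cset n l) + Measure.pi ν (Mset n l))) := by gcongr
          _ = _ := by ring

lemma lower_bound (hsym : ∀ i, (ν i).map (fun y => -y) = ν i) (l l' δ : ℝ)
    (hll' : l < l') (h0 : 0 ≤ l') (hδ : 0 < δ) :
    Measure.pi ν (Kset n l) + Measure.pi ν (Cset n l') + Measure.pi ν (Cset n (l' + 2 * δ))
      ≤ 1 + Measure.pi ν (Uset n δ) := by
  have hdisj1 : Disjoint (Kset n l) (Aset n l') := by
    refine Set.disjoint_left.mpr ?_
    rintro x hK ⟨⟨j, hj, hle⟩, _⟩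
    exact absurd (hK j hj) (not_le.mpr (lt_of_lt_of_le hll' hle))
  have hdisj2 : Disjoint (Kset n l) (Cset n l') := by
    refine Set.disjoint_left.mpr ?_
    intro x hK hC
    exact absurd (hK n le_rfl) (not_le.mpr (lt_trans hll' hC))
  have hdisj3 : Disjoint (Aset n l') (Cset n l') := by
    refine Set.disjoint_left.mpr ?_
    rintro x ⟨_, hlt⟩ hC
    exact absurd hC (not_lt.mpr (le_of_lt hlt))
  have hsum : Measure.pi ν (Kset n l) + Measure.pi ν (Aset n l') + Measure.pi ν (Cset n l')
      ≤ 1 := by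
    rw [add_assoc, ← measure_union hdisj3 (measurableSet_Cset l'), ← measure_union
      (Set.disjoint_union_right.mpr ⟨hdisj1, hdisj2⟩)
      (((measurableSet_Aset l').union (measurableSet_Cset l')))]
    exact prob_le_one
  have hAlow : Measure.pi ν (Cset n (l' + 2 * δ))
      ≤ Measure.pi ν (Aset n l') + Measure.pi ν (Uset n δ) := by
    have hsub : Cset n (l' + 2 * δ) ⊆ (reflMap l' ⁻¹' (Aset n l')) ∪ Uset n δ := by
      intro x hx
      by_cases hU : x ∈ Uset n δ
      · exact Or.inr hU
      · exact Or.inl (lower_subset l' δ h0 hδ ⟨hx, hU⟩)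
    calc Measure.pi ν (Cset n (l' + 2 * δ)) ≤
        Measure.pi ν ((reflMap l' ⁻¹' (Aset n l')) ∪ Uset n δ) := measure_mono hsub
      _ ≤ Measure.pi ν (reflMap l' ⁻¹' (Aset n l')) + Measure.pi ν (Uset n δ) :=
          measure_union_le _ _
      _ = Measure.pi ν (Aset n l') + Measure.pi ν (Uset n δ) := by
          rw [measure_reflMap_preimage ν hsym l' (measurableSet_Aset l')]
  calc Measure.pi ν (Kset n l) + Measure.pi ν (Cset n l') + Measure.pi ν (Cset n (l' + 2 * δ))
      ≤ Measure.pi ν (Kset n l) + Measure.pi ν (Cset n l')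
        + (Measure.pi ν (Aset n l') + Measure.pi ν (Uset n δ)) := by gcongr
    _ = (Measure.pi ν (Kset n l) + Measure.pi ν (Aset n l') + Measure.pi ν (Cset n l'))
        + Measure.pi ν (Uset n δ) := by ring
    _ ≤ 1 + Measure.pi ν (Uset n δ) := by gcongr

end Bounds
section Gauss

lemma gaussian_symm (v : ℝ≥0) : (gaussianReal 0 v).map (fun y : ℝ => -y) = gaussianReal 0 v := by
  have h := gaussianReal_map_const_mul (μ := 0) (v := v) (-1)
  have h2 : (NNReal.mk ((-1 : ℝ) ^ 2) (sq_nonneg _) : ℝ≥0) = 1 := by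
    ext; norm_num
  rw [h2, one_mul, mul_zero] at h
  simpa [neg_one_mul] using h

lemma gaussian_singleton (v : ℝ≥0) (hv : v ≠ 0) (a : ℝ) : gaussianReal 0 v {a} = 0 :=
  gaussianReal_absolutelyContinuous 0 hv (measure_singleton a)

/-- The standard Gaussian measure. -/
noncomputable def stdG : Measure ℝ := gaussianReal 0 1

instance : IsProbabilityMeasure stdG := by unfold stdG; infer_instance

lemma stdG_neg_apply (l : ℝ) : stdG (Set.Iio (-l)) = stdG (Set.Ioi l) := by
  conv_lhs => rw [stdG, ← gaussian_symm 1]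
  rw [Measure.map_apply measurable_neg measurableSet_Iio]
  congr 1
  ext x
  simp

lemma stdG_Icc_add (l : ℝ) (hl : 0 ≤ l) :
    stdG (Set.Icc (-l) l) + 2 * stdG (Set.Ioi l) = 1 := by
  have hdisj1 : Disjoint (Set.Iio (-l)) (Set.Icc (-l) l) := by
    refine Set.disjoint_left.mpr fun x hx hx2 => ?_
    exact absurd hx2.1 (not_le.mpr hx)
  have hdisj2 : Disjoint (Set.Iio (-l) ∪ Set.Icc (-l) l) (Set.Ioi l) := by
    refine Set.disjoint_left.mpr fun x hx hx2 => ?_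
    simp only [Set.mem_union, Set.mem_Iio, Set.mem_Icc] at hx
    simp only [Set.mem_Ioi] at hx2
    rcases hx with hx | hx
    · linarith
    · linarith [hx.2]
  have hcover : Set.Iio (-l) ∪ Set.Icc (-l) l ∪ Set.Ioi l = Set.univ := by
    ext x
    simp only [Set.mem_union, Set.mem_Iio, Set.mem_Icc, Set.mem_Ioi, Set.mem_univ, iff_true]
    by_cases h1 : x < -l
    · exact Or.inl (Or.inl h1)
    · by_cases h2 : x ≤ l
      · exact Or.inl (Or.inr ⟨not_lt.mp h1, h2⟩)
      · exact Or.inr (not_le.mp h2)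
  have := measure_union hdisj2 measurableSet_Ioi (μ := stdG)
  rw [hcover] at this
  rw [measure_union hdisj1 measurableSet_Icc, measure_univ] at this
  rw [stdG_neg_apply] at this
  calc stdG (Set.Icc (-l) l) + 2 * stdG (Set.Ioi l)
      = stdG (Set.Ioi l) + stdG (Set.Icc (-l) l) + stdG (Set.Ioi l) := by ring
    _ = 1 := this.symm

lemma sqrt_two_div_pi : Real.sqrt (2 / π) * Real.sqrt (2 * π) = 2 := by
  rw [← Real.sqrt_mul (by positivity)]
  rw [show 2 / π * (2 * π) = 4 by field_simp; ring]
  rw [show (4 : ℝ) = 2 ^ 2 by norm_num, Real.sqrt_sq (by norm_num)]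

lemma stdG_Icc_eq (l : ℝ) (hl : 0 ≤ l) :
    stdG (Set.Icc (-l) l)
      = ENNReal.ofReal (Real.sqrt (2 / π) * ∫ x in (0:ℝ)..l, Real.exp (-x ^ 2 / 2)) := by
  rw [stdG, gaussianReal_apply_eq_integral 0 one_ne_zero]
  congr 1
  rw [integral_Icc_eq_integral_Ioc, ← intervalIntegral.integral_of_le (by linarith)]
  have hpdf : ∀ x : ℝ, gaussianPDFReal 0 1 x = (Real.sqrt (2 * π))⁻¹ * Real.exp (-x ^ 2 / 2) := by
    intro x
    rw [gaussianPDFReal]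
    norm_num
  have hcont : Continuous fun x : ℝ => Real.exp (-x ^ 2 / 2) := by continuity
  calc ∫ x in (-l)..l, gaussianPDFReal 0 1 x
      = ∫ x in (-l)..l, (Real.sqrt (2 * π))⁻¹ * Real.exp (-x ^ 2 / 2) := by
        simp_rw [hpdf]
    _ = (Real.sqrt (2 * π))⁻¹ * ∫ x in (-l)..l, Real.exp (-x ^ 2 / 2) := by
        rw [intervalIntegral.integral_const_mul]
    _ = (Real.sqrt (2 * π))⁻¹ * ((∫ x in (-l)..(0:ℝ), Real.exp (-x ^ 2 / 2))
        + ∫ x in (0:ℝ)..l, Real.exp (-x ^ 2 / 2)) := by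
        rw [intervalIntegral.integral_add_adjacent_intervals
          (hcont.intervalIntegrable _ _) (hcont.intervalIntegrable _ _)]
    _ = (Real.sqrt (2 * π))⁻¹ * (2 * ∫ x in (0:ℝ)..l, Real.exp (-x ^ 2 / 2)) := by
        congr 1
        have : (∫ x in (-l)..(0:ℝ), Real.exp (-x ^ 2 / 2))
            = ∫ x in (0:ℝ)..l, Real.exp (-x ^ 2 / 2) := by
          rw [show ∫ x in (0:ℝ)..l, Real.exp (-x ^ 2 / 2)
              = ∫ x in (0:ℝ)..l, Real.exp (-(-x) ^ 2 / 2) by simp]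
          rw [intervalIntegral.integral_comp_neg (fun x => Real.exp (-x ^ 2 / 2))]
          norm_num
        rw [this]; ring
    _ = Real.sqrt (2 / π) * ∫ x in (0:ℝ)..l, Real.exp (-x ^ 2 / 2) := by
        have hne : Real.sqrt (2 * π) ≠ 0 := by positivity
        rw [show Real.sqrt (2/π) = 2 / Real.sqrt (2*π) by
          rw [eq_div_iff hne]; exact sqrt_two_div_pi]
        ring

lemma gaussianPDFReal_le (v : ℝ≥0) (x : ℝ) :
    gaussianPDFReal 0 v x ≤ (Real.sqrt (2 * π * v))⁻¹ := by
  rw [gaussianPDFReal]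
  have h1 : Real.exp (-(x - 0) ^ 2 / (2 * v)) ≤ 1 := by
    rw [Real.exp_le_one_iff]
    by_cases hv : (v:ℝ) = 0
    · simp [hv]
    · apply div_nonpos_of_nonpos_of_nonneg
      · simp [sq_nonneg]
      · positivity
  calc (Real.sqrt (2 * π * v))⁻¹ * Real.exp (-(x - 0) ^ 2 / (2 * v))
      ≤ (Real.sqrt (2 * π * v))⁻¹ * 1 := by
        apply mul_le_mul_of_nonneg_left h1 (by positivity)
    _ = _ := by ring

lemma stdG_Ioc_le (a b : ℝ) : stdG (Set.Ioc a b) ≤ ENNReal.ofReal (b - a) := by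
  rw [stdG, gaussianReal_apply 0 one_ne_zero]
  have hsqrt : (1 : ℝ) ≤ Real.sqrt (2 * π * ((1:ℝ≥0):ℝ)) := by
    rw [show (1:ℝ) = Real.sqrt 1 by simp]
    apply Real.sqrt_le_sqrt
    rw [NNReal.coe_one, mul_one]
    nlinarith [Real.pi_gt_three]
  calc ∫⁻ x in Set.Ioc a b, gaussianPDF 0 1 x
      ≤ ∫⁻ _ in Set.Ioc a b, 1 := by
        apply lintegral_mono
        intro x
        rw [gaussianPDF]
        calc ENNReal.ofReal (gaussianPDFReal 0 1 x)
            ≤ ENNReal.ofReal ((Real.sqrt (2 * π * ((1:ℝ≥0):ℝ)))⁻¹) :=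
              ENNReal.ofReal_le_ofReal (gaussianPDFReal_le 1 x)
          _ ≤ ENNReal.ofReal 1 := by
              apply ENNReal.ofReal_le_ofReal
              rw [inv_le_one_iff₀]
              right; exact hsqrt
          _ = 1 := ENNReal.ofReal_one
    _ = volume (Set.Ioc a b) := setLIntegral_one _
    _ = ENNReal.ofReal (b - a) := Real.volume_Ioc

end Gauss
section Tails

lemma lintegral_exp_stdG :
    ∫⁻ x, ENNReal.ofReal (Real.exp x) ∂stdG = ENNReal.ofReal (Real.exp (1 / 2)) := by
  rw [stdG, gaussianReal_of_var_ne_zero 0 one_ne_zero,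
    lintegral_withDensity_eq_lintegral_mul volume (measurable_gaussianPDF 0 1)
      (by exact Real.measurable_exp.ennreal_ofReal)]
  have hpt : ∀ x : ℝ, (gaussianPDF 0 1 * fun x => ENNReal.ofReal (Real.exp x)) x
      = ENNReal.ofReal (Real.exp (1 / 2)) * gaussianPDF 1 1 x := by
    intro x
    simp only [Pi.mul_apply, gaussianPDF]
    rw [← ENNReal.ofReal_mul (gaussianPDFReal_nonneg _ _ _),
      ← ENNReal.ofReal_mul (Real.exp_nonneg _)]
    congr 1
    rw [gaussianPDFReal, gaussianPDFReal]
    simp only [NNReal.coe_one, mul_one, sub_zero]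
    rw [mul_assoc, ← Real.exp_add, mul_comm (Real.exp (1/2)), mul_assoc, ← Real.exp_add]
    congr 1
    ring
  calc ∫⁻ x, (gaussianPDF 0 1 * fun x => ENNReal.ofReal (Real.exp x)) x
      = ∫⁻ x, ENNReal.ofReal (Real.exp (1 / 2)) * gaussianPDF 1 1 x := by
        simp_rw [hpt]
    _ = ENNReal.ofReal (Real.exp (1 / 2)) * ∫⁻ x, gaussianPDF 1 1 x := by
        rw [lintegral_const_mul _ (measurable_gaussianPDF 1 1)]
    _ = ENNReal.ofReal (Real.exp (1 / 2)) := by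
        rw [lintegral_gaussianPDF_eq_one 1 one_ne_zero, mul_one]

lemma stdG_Ioi_le_exp (y : ℝ) : stdG (Set.Ioi y) ≤ ENNReal.ofReal (Real.exp (1 / 2 - y)) := by
  have h1 : stdG (Set.Ioi y) = ∫⁻ _ in Set.Ioi y, 1 ∂stdG := (setLIntegral_one _).symm
  rw [h1]
  calc ∫⁻ _ in Set.Ioi y, 1 ∂stdG
      ≤ ∫⁻ x in Set.Ioi y, ENNReal.ofReal (Real.exp (x - y)) ∂stdG := by
        refine setLIntegral_mono (by exact (Real.measurable_exp.comp
          (measurable_id.sub measurable_const)).ennreal_ofReal) fun x hx => ?_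
        rw [show (1 : ℝ≥0∞) = ENNReal.ofReal 1 from ENNReal.ofReal_one.symm]
        exact ENNReal.ofReal_le_ofReal (Real.one_le_exp (by
          simp only [Set.mem_Ioi] at hx; linarith))
    _ ≤ ∫⁻ x, ENNReal.ofReal (Real.exp (x - y)) ∂stdG := setLIntegral_le_lintegral _ _
    _ = ENNReal.ofReal (Real.exp (-y)) * ∫⁻ x, ENNReal.ofReal (Real.exp x) ∂stdG := by
        rw [← lintegral_const_mul _ (by exact Real.measurable_exp.ennreal_ofReal)]
        congr 1
        funext x
        rw [← ENNReal.ofReal_mul (Real.exp_nonneg _), ← Real.exp_add]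
        congr 1
        ring
    _ = ENNReal.ofReal (Real.exp (1 / 2 - y)) := by
        rw [lintegral_exp_stdG, ← ENNReal.ofReal_mul (Real.exp_nonneg _), ← Real.exp_add]
        congr 1
        ring

lemma gaussian_Ioi_scaling (v : ℝ≥0) (hv : v ≠ 0) (δ : ℝ) :
    gaussianReal 0 v (Set.Ioi δ) = stdG (Set.Ioi (δ / Real.sqrt v)) := by
  have hvpos : (0 : ℝ) < v := by
    rcases lt_or_eq_of_le (v.coe_nonneg) with h | h
    · exact h
    · exact absurd (by exact_mod_cast h.symm) hv
  have hc : (0 : ℝ) < Real.sqrt v := Real.sqrt_pos.mpr hvpos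
  have h := gaussianReal_map_const_mul (μ := 0) (v := 1) (Real.sqrt v)
  have h2 : (NNReal.mk ((Real.sqrt v) ^ 2) (sq_nonneg _) : ℝ≥0) * 1 = v := by
    ext
    simp [Real.sq_sqrt v.coe_nonneg]
  rw [h2, mul_zero] at h
  rw [← h, Measure.map_apply (measurable_const_mul _) measurableSet_Ioi]
  congr 1
  ext x
  simp only [Set.mem_preimage, Set.mem_Ioi]
  rw [div_lt_iff₀ hc, mul_comm]

lemma pi_eval_apply {n : ℕ} (ν : Fin n → Measure ℝ) [∀ i, IsProbabilityMeasure (ν i)]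
    (i : Fin n) {s : Set ℝ} (hs : MeasurableSet s) :
    Measure.pi ν {x | x i ∈ s} = ν i s := by
  classical
  have hset : {x : Fin n → ℝ | x i ∈ s}
      = Set.pi Set.univ (Function.update (fun _ => Set.univ) i s) := by
    ext x
    simp only [Set.mem_setOf_eq, Set.mem_pi, Set.mem_univ, true_implies]
    constructor
    · intro hx j
      by_cases hj : j = i
      · subst hj; rwa [Function.update_self]
      · rw [Function.update_of_ne hj]; trivial
    · intro hx
      have := hx i
      rwa [Function.update_self] at this
  rw [hset, Measure.pi_pi]
  rw [Finset.prod_eq_single i (fun j _ hji => by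
    rw [Function.update_of_ne hji]; exact measure_univ) (fun h => absurd (Finset.mem_univ i) h)]
  rw [Function.update_self]

lemma Uset_bound {n : ℕ} (ν : Fin n → Measure ℝ) [∀ i, IsProbabilityMeasure (ν i)]
    (m0 : Measure ℝ) (hident : ∀ i, ν i = m0) (δ : ℝ) :
    Measure.pi ν (Uset n δ) ≤ n * m0 (Set.Ioi δ) := by
  calc Measure.pi ν (Uset n δ) ≤ ∑' i : Fin n, Measure.pi ν {x | δ < x i} :=
      measure_iUnion_le _
    _ = ∑ i : Fin n, Measure.pi ν {x | x i ∈ Set.Ioi δ} := tsum_fintype _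
    _ = ∑ i : Fin n, m0 (Set.Ioi δ) := by
        refine Finset.sum_congr rfl fun i _ => ?_
        rw [pi_eval_apply ν i measurableSet_Ioi, hident i]
    _ = n * m0 (Set.Ioi δ) := by
        rw [Finset.sum_const, Finset.card_univ, Fintype.card_fin, nsmul_eq_mul]

lemma sqrt_two_pow (N : ℕ) : Real.sqrt (2 ^ N) = Real.sqrt 2 ^ N := by
  rw [Real.sqrt_eq_iff_mul_self_eq (by positivity) (by positivity)]
  rw [← pow_add]
  rw [show N + N = 2 * N by ring, pow_mul]
  norm_num

lemma err_tendsto {δ : ℝ} (hδ : 0 < δ) :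
    Tendsto (fun N : ℕ => (2 ^ N : ℝ≥0∞) * ENNReal.ofReal (Real.exp (1 / 2 - δ * Real.sqrt (2 ^ N))))
      atTop (𝓝 0) := by
  have key : ∀ N : ℕ, (2 ^ N : ℝ≥0∞) * ENNReal.ofReal (Real.exp (1 / 2 - δ * Real.sqrt (2 ^ N)))
      = ENNReal.ofReal ((2 : ℝ) ^ N * Real.exp (1 / 2 - δ * Real.sqrt (2 ^ N))) := by
    intro N
    rw [ENNReal.ofReal_mul (by positivity)]
    congr 1
    rw [ENNReal.ofReal_pow (by norm_num : (0:ℝ) ≤ 2), ENNReal.ofReal_ofNat]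
  simp_rw [key]
  rw [show (0 : ℝ≥0∞) = ENNReal.ofReal 0 from ENNReal.ofReal_zero.symm]
  apply ENNReal.tendsto_ofReal
  -- real-valued limit
  have hbase : Tendsto (fun u : ℝ => u ^ 2 * Real.exp (-u)) atTop (𝓝 0) :=
    tendsto_pow_mul_exp_neg_atTop_nhds_zero 2
  have hlin : Tendsto (fun t : ℝ => δ * t) atTop atTop :=
    Tendsto.const_mul_atTop hδ tendsto_id
  have hcomp : Tendsto (fun t : ℝ => (δ * t) ^ 2 * Real.exp (-(δ * t))) atTop (𝓝 0) :=
    hbase.comp hlin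
  have hmain : Tendsto (fun t : ℝ => t ^ 2 * Real.exp (1 / 2 - δ * t)) atTop (𝓝 0) := by
    have h2 : Tendsto (fun t : ℝ => (δ⁻¹ ^ 2 * Real.exp (1 / 2))
        * ((δ * t) ^ 2 * Real.exp (-(δ * t)))) atTop
        (𝓝 ((δ⁻¹ ^ 2 * Real.exp (1 / 2)) * 0)) := hcomp.const_mul _
    rw [mul_zero] at h2
    refine h2.congr fun t => ?_
    have hδ' : δ ≠ 0 := ne_of_gt hδ
    rw [show (1:ℝ)/2 - δ*t = 1/2 + -(δ*t) by ring, Real.exp_add, mul_pow]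
    field_simp
  have hsqrt : Tendsto (fun N : ℕ => Real.sqrt (2 ^ N)) atTop atTop := by
    simp_rw [sqrt_two_pow]
    refine tendsto_pow_atTop_atTop_of_one_lt ?_
    rw [show (1:ℝ) = Real.sqrt 1 by simp]
    exact Real.sqrt_lt_sqrt (by norm_num) (by norm_num)
  have hfin := hmain.comp hsqrt
  refine hfin.congr fun N => ?_
  simp only [Function.comp_apply]
  rw [Real.sq_sqrt (by positivity)]

end Tails
section Joint

lemma map_joint {Ω : Type*} [MeasurableSpace Ω] (μ : Measure Ω) [IsProbabilityMeasure μ]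
    {k : ℕ} (X : Fin k → Ω → ℝ) (hm : ∀ i, Measurable (X i))
    (h : iIndepFun X μ) :
    Measure.map (fun ω i => X i ω) μ = Measure.pi (fun i => Measure.map (X i) μ) := by
  haveI : ∀ i, IsProbabilityMeasure (Measure.map (X i) μ) :=
    fun i => Measure.isProbabilityMeasure_map (hm i).aemeasurable
  haveI : ∀ i, SigmaFinite (Measure.map (X i) μ) := fun i => inferInstance
  refine (Measure.pi_eq (μ := fun i => Measure.map (X i) μ)
    (μ' := Measure.map (fun ω i => X i ω) μ) fun s hs => ?_).symm
  rw [Measure.map_apply (measurable_pi_lambda _ fun i => hm i) (MeasurableSet.univ_pi hs)]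
  have hpre : (fun ω i => X i ω) ⁻¹' Set.pi Set.univ s = ⋂ i ∈ Finset.univ, X i ⁻¹' s i := by
    ext ω
    simp [Set.mem_pi]
  rw [hpre, h.measure_inter_preimage_eq_mul Finset.univ (fun i _ => hs i)]
  exact Finset.prod_congr rfl fun i _ =>
    (Measure.map_apply (hm i) (hs i)).symm

end Joint
section BM

variable {Ω : Type*} [MeasurableSpace Ω] {μ : Measure Ω} [IsProbabilityMeasure μ]
  {B : ℝ → Ω → ℝ}

/-- increments over the dyadic grid of step `2^{-N}`. -/
noncomputable def incF (B : ℝ → Ω → ℝ) (N : ℕ) : Ω → Fin (2 ^ N) → ℝ :=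
  fun ω i => B ((((i : ℕ) : ℝ) + 1) / 2 ^ N) ω - B (((i : ℕ) : ℝ) / 2 ^ N) ω

/-- variance of one increment. -/
noncomputable def vN (N : ℕ) : ℝ≥0 := Real.toNNReal (1 / 2 ^ N)

lemma vN_coe (N : ℕ) : ((vN N : ℝ≥0) : ℝ) = 1 / 2 ^ N := by
  rw [vN, Real.coe_toNNReal _ (by positivity)]

lemma vN_ne_zero (N : ℕ) : vN N ≠ 0 := by
  intro h
  have h1 := vN_coe N
  rw [h] at h1
  simp only [NNReal.coe_zero] at h1
  have h2 : (0:ℝ) < 1 / 2 ^ N := by positivity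
  rw [← h1] at h2
  exact lt_irrefl _ h2

lemma measurable_incF (hmeas : ∀ t, Measurable (B t)) (N : ℕ) (i : Fin (2 ^ N)) :
    Measurable fun ω => incF B N ω i := (hmeas _).sub (hmeas _)

lemma incF_law (hB : IsStandardBM B μ) (N : ℕ) (i : Fin (2 ^ N)) :
    Measure.map (fun ω => incF B N ω i) μ = gaussianReal 0 (vN N) := by
  have h2 : (0:ℝ) < 2 ^ N := by positivity
  have hi : ((i : ℕ) : ℝ) + 1 ≤ 2 ^ N := by
    have h3 : ((i : ℕ) : ℝ) + 1 ≤ ((2 ^ N : ℕ) : ℝ) := by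
      exact_mod_cast Nat.succ_le_of_lt i.isLt
    simpa using h3
  have h := hB.2.2.2.2 (((i : ℕ) : ℝ) / 2 ^ N) ((((i : ℕ) : ℝ) + 1) / 2 ^ N)
    (by positivity) (by gcongr; linarith) (by rw [div_le_one h2]; exact hi)
  rw [show (((i:ℕ):ℝ) + 1) / 2 ^ N - ((i:ℕ):ℝ) / 2 ^ N = 1 / 2 ^ N by
    rw [div_sub_div_same]; norm_num] at h
  exact h

lemma incF_indep (hB : IsStandardBM B μ) (N : ℕ) :
    iIndepFun (fun (i : Fin (2 ^ N)) (ω : Ω) => incF B N ω i) μ := by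
  have hmono : StrictMono (fun j : Fin (2 ^ N + 1) => ((j : ℕ) : ℝ) / 2 ^ N) := by
    intro a b hab
    have hc : ((a : ℕ) : ℝ) < ((b : ℕ) : ℝ) := by exact_mod_cast hab
    show ((a : ℕ) : ℝ) / 2 ^ N < ((b : ℕ) : ℝ) / 2 ^ N
    exact (div_lt_div_iff_of_pos_right (by positivity)).mpr hc
  have hmem : ∀ j : Fin (2 ^ N + 1), ((j : ℕ) : ℝ) / 2 ^ N ∈ Set.Icc (0:ℝ) 1 := by
    intro j
    constructor
    · positivity
    · rw [div_le_one (by positivity)]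
      have h3 : ((j : ℕ) : ℝ) ≤ ((2 ^ N : ℕ) : ℝ) := by
        exact_mod_cast Nat.lt_succ_iff.mp j.isLt
      simpa using h3
  have h := hB.2.2.2.1 (2 ^ N) _ hmono hmem
  have heq : (fun i : Fin (2 ^ N) => fun ω =>
      B ((fun j : Fin (2 ^ N + 1) => ((j : ℕ) : ℝ) / 2 ^ N) i.succ) ω
        - B ((fun j : Fin (2 ^ N + 1) => ((j : ℕ) : ℝ) / 2 ^ N) i.castSucc) ω)
      = fun (i : Fin (2 ^ N)) (ω : Ω) => incF B N ω i := by
    funext i ω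
    simp only [incF, Fin.val_succ, Fin.coe_castSucc]
    push_cast
    ring_nf
  rwa [heq] at h

lemma incF_joint (hB : IsStandardBM B μ) (N : ℕ) :
    Measure.map (incF B N) μ
      = Measure.pi (fun _ : Fin (2 ^ N) => gaussianReal 0 (vN N)) := by
  have h := map_joint μ (fun (i : Fin (2 ^ N)) (ω : Ω) => incF B N ω i)
    (fun i => measurable_incF hB.1 N i) (incF_indep hB N)
  rw [show (fun (ω : Ω) (i : Fin (2 ^ N)) => incF B N ω i) = incF B N from rfl] at h
  rw [h]
  congr 1
  funext i
  exact incF_law hB N i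

lemma psum_incF (N : ℕ) (ω : Ω) : ∀ j, j ≤ 2 ^ N →
    psum (incF B N ω) j = B ((j : ℝ) / 2 ^ N) ω - B 0 ω := by
  intro j
  induction j with
  | zero => intro _; simp [psum_zero]
  | succ j ih =>
      intro hj
      have hjlt : j < 2 ^ N := by omega
      rw [psum_succ, ih (by omega)]
      rw [show ext (incF B N ω) j = incF B N ω ⟨j, hjlt⟩ from by rw [ext, dif_pos hjlt]]
      simp only [incF]
      push_cast
      ring

/-- grid events -/
def FN (B : ℝ → Ω → ℝ) (l : ℝ) (N : ℕ) : Set Ω :=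
  ⋂ j ∈ Finset.range (2 ^ N + 1), {ω | B ((j : ℝ) / 2 ^ N) ω ≤ l}

lemma measurableSet_FN (hmeas : ∀ t, Measurable (B t)) (l : ℝ) (N : ℕ) :
    MeasurableSet (FN B l N) :=
  MeasurableSet.biInter (Set.to_countable _)
    fun j _ => measurableSet_le (hmeas _) measurable_const

lemma mem_FN_iff (l : ℝ) (N : ℕ) (ω : Ω) :
    ω ∈ FN B l N ↔ ∀ j : ℕ, j ≤ 2 ^ N → B ((j : ℝ) / 2 ^ N) ω ≤ l := by
  simp only [FN, Set.mem_iInter, Finset.mem_range, Set.mem_setOf_eq]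
  exact ⟨fun h j hj => h j (by omega), fun h j hj => h j (by omega)⟩

lemma FN_antitone (l : ℝ) : Antitone (FN B l) := by
  apply antitone_nat_of_succ_le
  intro N ω hω
  rw [mem_FN_iff] at hω ⊢
  intro j hj
  have key : ((j : ℝ)) / 2 ^ N = ((2 * j : ℕ) : ℝ) / 2 ^ (N + 1) := by
    push_cast
    rw [pow_succ]
    field_simp
  rw [key]
  exact hω (2 * j) (by rw [pow_succ]; omega)

lemma FN_measure_eq (hB : IsStandardBM B μ) (l : ℝ) (N : ℕ) :
    μ (FN B l N) = Measure.pi (fun _ : Fin (2 ^ N) => gaussianReal 0 (vN N))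
      (Kset (2 ^ N) l) := by
  have hae : FN B l N =ᵐ[μ] (incF B N) ⁻¹' (Kset (2 ^ N) l) := by
    rw [Filter.eventuallyEq_set]
    filter_upwards [hB.2.1] with ω h0
    rw [mem_FN_iff]
    simp only [Set.mem_preimage, Kset, Set.mem_setOf_eq]
    constructor
    · intro h j hj
      rw [psum_incF N ω j hj, h0, sub_zero]
      exact h j hj
    · intro h j hj
      have := h j hj
      rwa [psum_incF N ω j hj, h0, sub_zero] at this
  rw [measure_congr hae, ← Measure.map_apply (measurable_pi_lambda _
    fun i => measurable_incF hB.1 N i) (measurableSet_Kset l), incF_joint hB N]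

lemma last_law (hB : IsStandardBM B μ) (N : ℕ) {s : Set ℝ} (hs : MeasurableSet s) :
    Measure.pi (fun _ : Fin (2 ^ N) => gaussianReal 0 (vN N)) {x | psum x (2 ^ N) ∈ s}
      = stdG s := by
  have hmeasset : MeasurableSet {x : Fin (2 ^ N) → ℝ | psum x (2 ^ N) ∈ s} :=
    (measurable_psum (2 ^ N)) hs
  rw [← incF_joint hB N, Measure.map_apply (measurable_pi_lambda _
    fun i => measurable_incF hB.1 N i) hmeasset]
  have hset : (incF B N) ⁻¹' {x | psum x (2 ^ N) ∈ s} = (fun ω => B 1 ω - B 0 ω) ⁻¹' s := by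
    ext ω
    simp only [Set.mem_preimage, Set.mem_setOf_eq]
    rw [psum_incF N ω (2 ^ N) le_rfl]
    rw [show ((2 ^ N : ℕ) : ℝ) / 2 ^ N = 1 by
      push_cast
      exact div_self (by positivity)]
  rw [hset, ← Measure.map_apply (f := fun ω => B 1 ω - B 0 ω) ((hB.1 1).sub (hB.1 0)) hs]
  rw [hB.2.2.2.2 0 1 le_rfl one_pos le_rfl]
  rw [stdG]
  norm_num

end BM
section Final

variable {Ω : Type*} [MeasurableSpace Ω] {μ : Measure Ω} [IsProbabilityMeasure μ]
  {B : ℝ → Ω → ℝ}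

lemma stdG_singleton (c : ℝ) : stdG {c} = 0 := by
  rw [stdG]; exact gaussian_singleton 1 one_ne_zero c

lemma bound_lower (hB : IsStandardBM B μ) (l : ℝ) (N : ℕ) :
    1 ≤ μ (FN B l N) + 2 * stdG (Set.Ioi l) := by
  have h := upper_bound (fun _ : Fin (2 ^ N) => gaussianReal 0 (vN N))
    (fun _ => gaussian_symm (vN N)) l
  rw [← FN_measure_eq hB l N,
    show Cset (2 ^ N) l = {x : Fin (2 ^ N) → ℝ | psum x (2 ^ N) ∈ Set.Ioi l} from rfl,
    show Mset (2 ^ N) l = {x : Fin (2 ^ N) → ℝ | psum x (2 ^ N) ∈ ({l} : Set ℝ)} from rfl,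
    last_law hB N measurableSet_Ioi, last_law hB N (measurableSet_singleton l),
    stdG_singleton, add_zero] at h
  exact h

lemma bound_upper (hB : IsStandardBM B μ) {l : ℝ} (hl : 0 ≤ l) {ε : ℝ} (hε : 0 < ε) (N : ℕ) :
    μ (FN B l N) + stdG (Set.Ioi (l + ε)) + stdG (Set.Ioi (l + 3 * ε))
      ≤ 1 + (2 ^ N : ℝ≥0∞) * ENNReal.ofReal (Real.exp (1 / 2 - ε * Real.sqrt (2 ^ N))) := by
  have h := lower_bound (fun _ : Fin (2 ^ N) => gaussianReal 0 (vN N))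
    (fun _ => gaussian_symm (vN N)) l (l + ε) ε (by linarith) (by linarith) hε
  rw [← FN_measure_eq hB l N, show l + ε + 2 * ε = l + 3 * ε by ring,
    show Cset (2 ^ N) (l + ε) = {x : Fin (2 ^ N) → ℝ | psum x (2 ^ N) ∈ Set.Ioi (l + ε)} from rfl,
    show Cset (2 ^ N) (l + 3 * ε)
      = {x : Fin (2 ^ N) → ℝ | psum x (2 ^ N) ∈ Set.Ioi (l + 3 * ε)} from rfl,
    last_law hB N measurableSet_Ioi, last_law hB N measurableSet_Ioi] at h
  refine le_trans h ?_
  gcongr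
  calc Measure.pi (fun _ : Fin (2 ^ N) => gaussianReal 0 (vN N)) (Uset (2 ^ N) ε)
      ≤ (2 ^ N : ℕ) * (gaussianReal 0 (vN N)) (Set.Ioi ε) :=
        Uset_bound _ _ (fun _ => rfl) ε
    _ = (2 ^ N : ℝ≥0∞) * stdG (Set.Ioi (ε * Real.sqrt (2 ^ N))) := by
        rw [gaussian_Ioi_scaling (vN N) (vN_ne_zero N) ε]
        congr 1
        · push_cast; ring
        · congr 2
          rw [vN_coe, one_div, Real.sqrt_inv, div_inv_eq_mul]
    _ ≤ (2 ^ N : ℝ≥0∞) * ENNReal.ofReal (Real.exp (1 / 2 - ε * Real.sqrt (2 ^ N))) := by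
        gcongr
        exact stdG_Ioi_le_exp _

lemma main_eq (hB : IsStandardBM B μ) {l : ℝ} (hl : 0 ≤ l) :
    μ (⋂ N, FN B l N)
      = ENNReal.ofReal (Real.sqrt (2 / π) * ∫ x in (0:ℝ)..l, Real.exp (-x ^ 2 / 2)) := by
  set L := μ (⋂ N, FN B l N) with hLdef
  have hT : Tendsto (fun N => μ (FN B l N)) atTop (𝓝 L) := by
    have h := tendsto_measure_iInter_atTop (μ := μ) (s := FN B l)
      (fun N => (measurableSet_FN hB.1 l N).nullMeasurableSet) (FN_antitone l)
      ⟨0, measure_ne_top μ _⟩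
    exact h
  have h1 : 1 ≤ L + 2 * stdG (Set.Ioi l) := by
    have hT2 : Tendsto (fun N => μ (FN B l N) + 2 * stdG (Set.Ioi l)) atTop
        (𝓝 (L + 2 * stdG (Set.Ioi l))) := hT.add tendsto_const_nhds
    exact ge_of_tendsto' hT2 fun N => bound_lower hB l N
  have h2 : ∀ ε : ℝ, 0 < ε →
      L + stdG (Set.Ioi (l + ε)) + stdG (Set.Ioi (l + 3 * ε)) ≤ 1 := by
    intro ε hε
    have hTlhs : Tendsto
        (fun N => μ (FN B l N) + stdG (Set.Ioi (l + ε)) + stdG (Set.Ioi (l + 3 * ε))) atTop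
        (𝓝 (L + stdG (Set.Ioi (l + ε)) + stdG (Set.Ioi (l + 3 * ε)))) :=
      (hT.add tendsto_const_nhds).add tendsto_const_nhds
    have hTrhs : Tendsto (fun N : ℕ =>
        1 + (2 ^ N : ℝ≥0∞) * ENNReal.ofReal (Real.exp (1 / 2 - ε * Real.sqrt (2 ^ N)))) atTop
        (𝓝 1) := by
      have h := (err_tendsto hε).const_add (1 : ℝ≥0∞)
      rwa [add_zero] at h
    exact le_of_tendsto_of_tendsto' hTlhs hTrhs fun N => bound_upper hB hl hε N
  have key : ∀ c : ℝ, stdG (Set.Ioi l) ≤ stdG (Set.Ioi (l + c)) + ENNReal.ofReal c := by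
    intro c
    calc stdG (Set.Ioi l) ≤ stdG (Set.Ioi (l + c) ∪ Set.Ioc l (l + c)) := by
          apply measure_mono
          intro x hx
          by_cases h : l + c < x
          · exact Or.inl h
          · exact Or.inr ⟨hx, not_lt.mp h⟩
      _ ≤ stdG (Set.Ioi (l + c)) + stdG (Set.Ioc l (l + c)) := measure_union_le _ _
      _ ≤ stdG (Set.Ioi (l + c)) + ENNReal.ofReal c := by
          gcongr
          refine le_trans (stdG_Ioc_le l (l + c)) ?_
          rw [add_sub_cancel_left]
  have h3 : L + 2 * stdG (Set.Ioi l) ≤ 1 := by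
    refine ENNReal.le_of_forall_pos_le_add fun ε hε _ => ?_
    set e : ℝ := (ε : ℝ) / 4 with he
    have hepos : 0 < e := by positivity
    calc L + 2 * stdG (Set.Ioi l) = L + (stdG (Set.Ioi l) + stdG (Set.Ioi l)) := by
          rw [two_mul]
      _ ≤ L + ((stdG (Set.Ioi (l + e)) + ENNReal.ofReal e)
          + (stdG (Set.Ioi (l + 3 * e)) + ENNReal.ofReal (3 * e))) := by
          gcongr
          · exact key e
          · exact key (3 * e)
      _ = (L + stdG (Set.Ioi (l + e)) + stdG (Set.Ioi (l + 3 * e)))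
          + (ENNReal.ofReal e + ENNReal.ofReal (3 * e)) := by ring
      _ ≤ 1 + (ENNReal.ofReal e + ENNReal.ofReal (3 * e)) := by
          gcongr
          exact h2 e hepos
      _ = 1 + ENNReal.ofReal (e + 3 * e) := by
          rw [ENNReal.ofReal_add (le_of_lt hepos) (by positivity)]
      _ = 1 + ε := by
          rw [show e + 3 * e = (ε : ℝ) by rw [he]; ring, ENNReal.ofReal_coe_nnreal]
  have hLe : L + 2 * stdG (Set.Ioi l) = 1 := le_antisymm h3 h1
  have hfin : 2 * stdG (Set.Ioi l) ≠ ⊤ :=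
    ENNReal.mul_ne_top (by norm_num) (measure_ne_top _ _)
  have hfinal : L = stdG (Set.Icc (-l) l) := by
    have h4 : L + 2 * stdG (Set.Ioi l)
        = stdG (Set.Icc (-l) l) + 2 * stdG (Set.Ioi l) := by
      rw [hLe, stdG_Icc_add l hl]
    calc L = L + 2 * stdG (Set.Ioi l) - 2 * stdG (Set.Ioi l) :=
          (ENNReal.add_sub_cancel_right hfin).symm
      _ = stdG (Set.Icc (-l) l) + 2 * stdG (Set.Ioi l) - 2 * stdG (Set.Ioi l) := by rw [h4]
      _ = stdG (Set.Icc (-l) l) := ENNReal.add_sub_cancel_right hfin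
  rw [hfinal, stdG_Icc_eq l hl]

end Final
end BMRefl

/-- The running maximum of Brownian motion on `[0,1]` is distributed as `|N|`
for a standard Gaussian `N`: for all `λ ≥ 0`,
`P(max_{0≤s≤1} B(s) ≤ λ) = √(2/π) ∫_0^λ e^{-x²/2} dx`. -/
theorem stmt9 {Ω : Type*} [MeasurableSpace Ω] (μ : Measure Ω) [IsProbabilityMeasure μ]
    (B : ℝ → Ω → ℝ) (hB : IsStandardBM B μ) (l : ℝ) (hl : 0 ≤ l) :
    μ {ω | sSup ((fun s => B s ω) '' Set.Icc 0 1) ≤ l}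
      = ENNReal.ofReal (Real.sqrt (2 / π) * ∫ x in (0:ℝ)..l, Real.exp (-x ^ 2 / 2)) := by
  have hae : {ω | sSup ((fun s => B s ω) '' Set.Icc 0 1) ≤ l}
      =ᵐ[μ] ⋂ N, BMRefl.FN B l N := by
    rw [Filter.eventuallyEq_set]
    filter_upwards [hB.2.1, hB.2.2.1] with ω h0 hcont
    simp only [Set.mem_setOf_eq, Set.mem_iInter]
    constructor
    · intro hsup N
      rw [BMRefl.mem_FN_iff]
      intro j hj
      have hmem : (j : ℝ) / 2 ^ N ∈ Set.Icc (0:ℝ) 1 := by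
        constructor
        · positivity
        · rw [div_le_one (by positivity)]
          exact_mod_cast hj
      have hbdd : BddAbove ((fun s => B s ω) '' Set.Icc 0 1) :=
        (isCompact_Icc.image_of_continuousOn hcont).bddAbove
      exact le_trans (le_csSup hbdd ⟨_, hmem, rfl⟩) hsup
    · intro hFN
      apply csSup_le ((Set.nonempty_Icc.mpr (by norm_num)).image _)
      rintro y ⟨t, ht, rfl⟩
      set a : ℕ → ℝ := fun m => (⌊t * 2 ^ m⌋₊ : ℝ) / 2 ^ m with ha
      have hfl_le : ∀ m : ℕ, (⌊t * 2 ^ m⌋₊ : ℝ) ≤ t * 2 ^ m :=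
        fun m => Nat.floor_le (mul_nonneg ht.1 (by positivity))
      have hfl_gt : ∀ m : ℕ, t * 2 ^ m < (⌊t * 2 ^ m⌋₊ : ℝ) + 1 :=
        fun m => Nat.lt_floor_add_one _
      have hub : ∀ m, a m ≤ t := by
        intro m
        rw [ha, div_le_iff₀ (by positivity : (0:ℝ) < 2 ^ m)]
        exact hfl_le m
      have hlb : ∀ m, t - (1/2 : ℝ) ^ m ≤ a m := by
        intro m
        have hpow : ((1:ℝ)/2) ^ m * 2 ^ m = 1 := by
          rw [div_pow, one_pow]
          field_simp
        rw [ha, le_div_iff₀ (by positivity : (0:ℝ) < 2 ^ m)]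
        have := hfl_gt m
        nlinarith [this, hpow]
      have hta : Tendsto a atTop (𝓝 t) := by
        have hlow : Tendsto (fun m : ℕ => t - (1/2 : ℝ) ^ m) atTop (𝓝 t) := by
          have := tendsto_const_nhds (x := t) (f := atTop (α := ℕ)) |>.sub
            (tendsto_pow_atTop_nhds_zero_of_lt_one (by norm_num) (by norm_num)
              (r := (1/2 : ℝ)))
          rwa [sub_zero] at this
        exact tendsto_of_tendsto_of_tendsto_of_le_of_le hlow tendsto_const_nhds hlb hub
      have haIcc : ∀ m, a m ∈ Set.Icc (0:ℝ) 1 := by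
        intro m
        refine ⟨by rw [ha]; positivity, ?_⟩
        rw [ha, div_le_one (by positivity)]
        nlinarith [hfl_le m, ht.2, (by positivity : (0:ℝ) < 2 ^ m)]
      have hle : ∀ m, B (a m) ω ≤ l := by
        intro m
        have hj : ⌊t * 2 ^ m⌋₊ ≤ 2 ^ m := by
          have h5 : ((⌊t * 2 ^ m⌋₊ : ℕ) : ℝ) ≤ ((2 ^ m : ℕ) : ℝ) := by
            push_cast
            nlinarith [hfl_le m, ht.2, (by positivity : (0:ℝ) < 2 ^ m)]
          exact_mod_cast h5
        exact (BMRefl.mem_FN_iff l m ω).mp (hFN m) ⌊t * 2 ^ m⌋₊ hj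
      have hcw : ContinuousWithinAt (fun s => B s ω) (Set.Icc 0 1) t := hcont t ht
      have htend : Tendsto (fun m => B (a m) ω) atTop (𝓝 (B t ω)) := by
        apply hcw.tendsto.comp
        rw [tendsto_nhdsWithin_iff]
        exact ⟨hta, Filter.Eventually.of_forall haIcc⟩
      exact le_of_tendsto htend (Filter.Eventually.of_forall hle)
  rw [measure_congr hae]
  exact BMRefl.main_eq hB hl
end
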